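/- Let F: ℝ^N → ℝ^N be continuously differentiable with F(z̄) = 0, and let J: ℝ^N → ℝ^{N×N} be such that J(z) is invertible on an open ball B around z̄, with constants ω < ∞ and κ < 1 satisfying ‖J(z)⁻¹(F'(z) − F'(z'))‖ ≤ ω‖z − z'‖ and ‖J(z)⁻¹(F'(z) − J(z))‖ ≤ κ for all z, z' ∈ B. Then the Newton-type iterate z⁺ := z − J(z)⁻¹ F(z) satisfies ‖z⁺ − z̄‖ ≤ κ‖z − z̄‖ + (ω/2)‖z − z̄‖² for every z ∈ B. -/

import Mathlib

open Metric

/-- local contraction estimate for a single Newton-type step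
`z⁺ = z − J(z)⁻¹ F(z)` under the Lipschitz and compatibility conditions. -/
theorem newton_type_step_contraction (N : ℕ)
    (F : EuclideanSpace ℝ (Fin N) → EuclideanSpace ℝ (Fin N))
    (hF : ContDiff ℝ 1 F)
    (zbar : EuclideanSpace ℝ (Fin N)) (hFzbar : F zbar = 0)
    (J : EuclideanSpace ℝ (Fin N) → (EuclideanSpace ℝ (Fin N) ≃L[ℝ] EuclideanSpace ℝ (Fin N)))
    (r : ℝ) (hr : 0 < r) (ω κ : ℝ) (hκ : κ < 1)
    (hLip : ∀ z ∈ ball zbar r, ∀ z' ∈ ball zbar r,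
      ‖((J z).symm : EuclideanSpace ℝ (Fin N) →L[ℝ] EuclideanSpace ℝ (Fin N)).comp
        (fderiv ℝ F z - fderiv ℝ F z')‖ ≤ ω * ‖z - z'‖)
    (hComp : ∀ z ∈ ball zbar r,
      ‖((J z).symm : EuclideanSpace ℝ (Fin N) →L[ℝ] EuclideanSpace ℝ (Fin N)).comp
        (fderiv ℝ F z - ((J z : EuclideanSpace ℝ (Fin N) →L[ℝ] EuclideanSpace ℝ (Fin N))))‖ ≤ κ)
    (z : EuclideanSpace ℝ (Fin N)) (hz : z ∈ ball zbar r) :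
    ‖(z - (J z).symm (F z)) - zbar‖ ≤ κ * ‖z - zbar‖ + ω / 2 * ‖z - zbar‖ ^ 2 := by
  set A : EuclideanSpace ℝ (Fin N) →L[ℝ] EuclideanSpace ℝ (Fin N) :=
    ((J z).symm : EuclideanSpace ℝ (Fin N) →L[ℝ] EuclideanSpace ℝ (Fin N)) with hA
  set v : EuclideanSpace ℝ (Fin N) := z - zbar with hv
  have hdiff : Differentiable ℝ F := hF.differentiable one_ne_zero
  have hmem : ∀ t : ℝ, t ∈ Set.Icc (0:ℝ) 1 → zbar + t • v ∈ ball zbar r := by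
    intro t ht
    rw [mem_ball, dist_eq_norm, add_sub_cancel_left, norm_smul]
    have hv_lt : ‖v‖ < r := by
      have := mem_ball_iff_norm.mp hz; simpa [hv] using this
    calc ‖t‖ * ‖v‖ ≤ 1 * ‖v‖ := by
          apply mul_le_mul_of_nonneg_right _ (norm_nonneg _)
          rw [Real.norm_eq_abs, abs_le]; exact ⟨by linarith [ht.1], ht.2⟩
      _ < r := by simpa using hv_lt
  set c : EuclideanSpace ℝ (Fin N) := fderiv ℝ F z v with hc
  set g : ℝ → EuclideanSpace ℝ (Fin N) := fun t => A (F (zbar + t • v)) - t • A c with hg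
  set g' : ℝ → EuclideanSpace ℝ (Fin N) := fun t => A ((fderiv ℝ F (zbar + t • v)) v) - A c with hg'
  have hderiv : ∀ t : ℝ, HasDerivAt g (g' t) t := by
    intro t
    have h1 : HasDerivAt (fun s : ℝ => zbar + s • v) v t := by
      simpa using ((hasDerivAt_id t).smul_const v).const_add zbar
    have h2 : HasDerivAt (fun s : ℝ => F (zbar + s • v))
        ((fderiv ℝ F (zbar + t • v)) v) t :=
      ((hdiff (zbar + t • v)).hasFDerivAt).comp_hasDerivAt t h1
    have h3 : HasDerivAt (fun s : ℝ => A (F (zbar + s • v)))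
        (A ((fderiv ℝ F (zbar + t • v)) v)) t :=
      A.hasFDerivAt.comp_hasDerivAt t h2
    have h4 : HasDerivAt (fun s : ℝ => s • A c) (A c) t := by
      simpa using (hasDerivAt_id t).smul_const (A c)
    exact h3.sub h4
  have hcont : Continuous g' := by
    have hfd : Continuous (fderiv ℝ F) := hF.continuous_fderiv one_ne_zero
    apply Continuous.sub _ continuous_const
    exact A.continuous.comp
      ((ContinuousLinearMap.apply ℝ (EuclideanSpace ℝ (Fin N)) v).continuous.comp
        (hfd.comp (continuous_const.add (continuous_id.smul continuous_const))))
  have hint : IntervalIntegrable g' MeasureTheory.volume 0 1 :=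
    hcont.intervalIntegrable 0 1
  have hftc : ∫ t in (0:ℝ)..1, g' t = g 1 - g 0 :=
    intervalIntegral.integral_eq_sub_of_hasDerivAt (fun t _ => hderiv t) hint
  have hg1 : g 1 = A (F z) - A c := by simp [hg, hv]
  have hg0 : g 0 = 0 := by simp [hg, hFzbar]
  -- pointwise bound on g'
  have hbound : ∀ t ∈ Set.Icc (0:ℝ) 1, ‖g' t‖ ≤ ω * ‖v‖ * ‖v‖ * (1 - t) := by
    intro t ht
    have hmem' := hmem t ht
    have key := hLip z hz (zbar + t • v) hmem'
    have heq : g' t = -((A.comp (fderiv ℝ F z - fderiv ℝ F (zbar + t • v))) v) := by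
      simp [hg', ContinuousLinearMap.comp_apply, ContinuousLinearMap.sub_apply, hc]
    have hdist : ‖z - (zbar + t • v)‖ = (1 - t) * ‖v‖ := by
      have : z - (zbar + t • v) = (1 - t) • v := by
        rw [hv]; module
      rw [this, norm_smul, Real.norm_eq_abs, abs_of_nonneg (by linarith [ht.2])]
    calc ‖g' t‖ = ‖(A.comp (fderiv ℝ F z - fderiv ℝ F (zbar + t • v))) v‖ := by
          rw [heq, norm_neg]
      _ ≤ ‖A.comp (fderiv ℝ F z - fderiv ℝ F (zbar + t • v))‖ * ‖v‖ :=
          ContinuousLinearMap.le_opNorm _ _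
      _ ≤ (ω * ‖z - (zbar + t • v)‖) * ‖v‖ :=
          mul_le_mul_of_nonneg_right key (norm_nonneg _)
      _ = ω * ‖v‖ * ‖v‖ * (1 - t) := by rw [hdist]; ring
  -- bound the integral
  have hInt2 : IntervalIntegrable (fun t : ℝ => ω * ‖v‖ * ‖v‖ * (1 - t))
      MeasureTheory.volume 0 1 :=
    (continuous_const.mul (continuous_const.sub continuous_id)).intervalIntegrable 0 1
  have hnorm_int : ‖∫ t in (0:ℝ)..1, g' t‖ ≤ ω / 2 * ‖v‖ ^ 2 := by
    have h1 : ‖∫ t in (0:ℝ)..1, g' t‖ ≤ ∫ t in (0:ℝ)..1, ω * ‖v‖ * ‖v‖ * (1 - t) := by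
      calc ‖∫ t in (0:ℝ)..1, g' t‖ ≤ ∫ t in (0:ℝ)..1, ‖g' t‖ :=
            intervalIntegral.norm_integral_le_integral_norm (by norm_num)
        _ ≤ ∫ t in (0:ℝ)..1, ω * ‖v‖ * ‖v‖ * (1 - t) :=
            intervalIntegral.integral_mono_on (by norm_num)
              (hcont.norm.intervalIntegrable 0 1) hInt2 hbound
    have h2 : ∫ t in (0:ℝ)..1, ω * ‖v‖ * ‖v‖ * (1 - t) = ω / 2 * ‖v‖ ^ 2 := by
      rw [intervalIntegral.integral_const_mul]
      have : ∫ t in (0:ℝ)..1, (1 - t) = 1 / 2 := by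
        rw [intervalIntegral.integral_sub intervalIntegrable_const
            (intervalIntegral.intervalIntegrable_id)]
        simp
        norm_num
      rw [this]; ring
    linarith [h1, h2.le, h2.ge]
  -- first term bound
  have hterm1 : ‖v - A c‖ ≤ κ * ‖v‖ := by
    have heq : v - A c = -((A.comp (fderiv ℝ F z -
        ((J z : EuclideanSpace ℝ (Fin N) →L[ℝ] EuclideanSpace ℝ (Fin N))))) v) := by
      have hv' : A ((J z : EuclideanSpace ℝ (Fin N) →L[ℝ] EuclideanSpace ℝ (Fin N)) v) = v := (J z).symm_apply_apply v
      simp only [ContinuousLinearMap.comp_apply, ContinuousLinearMap.sub_apply, map_sub, hv', hc]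
      abel
    calc ‖v - A c‖ = ‖(A.comp (fderiv ℝ F z - ((J z : EuclideanSpace ℝ (Fin N) →L[ℝ] EuclideanSpace ℝ (Fin N))))) v‖ := by
          rw [heq, norm_neg]
      _ ≤ ‖A.comp (fderiv ℝ F z - ((J z : EuclideanSpace ℝ (Fin N) →L[ℝ] EuclideanSpace ℝ (Fin N))))‖ * ‖v‖ :=
          ContinuousLinearMap.le_opNorm _ _
      _ ≤ κ * ‖v‖ := mul_le_mul_of_nonneg_right (hComp z hz) (norm_nonneg _)
  -- assembly
  have hsplit : (z - (J z).symm (F z)) - zbar = (v - A c) - (A (F z) - A c) := by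
    have : ((J z).symm (F z) : EuclideanSpace ℝ (Fin N)) = A (F z) := rfl
    rw [this, hv]; abel
  have hterm2 : ‖A (F z) - A c‖ ≤ ω / 2 * ‖v‖ ^ 2 := by
    have : A (F z) - A c = ∫ t in (0:ℝ)..1, g' t := by rw [hftc, hg1, hg0, sub_zero]
    rw [this]; exact hnorm_int
  calc ‖(z - (J z).symm (F z)) - zbar‖ = ‖(v - A c) - (A (F z) - A c)‖ := by rw [hsplit]
    _ ≤ ‖v - A c‖ + ‖A (F z) - A c‖ := norm_sub_le _ _
    _ ≤ κ * ‖v‖ + ω / 2 * ‖v‖ ^ 2 := add_le_add hterm1 hterm2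
    _ = κ * ‖z - zbar‖ + ω / 2 * ‖z - zbar‖ ^ 2 := by rw [hv]
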